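/- For two Hermitian matrices A and E, the trace distance between the normalized matrix exponentials e^{A+E}/tr(e^{A+E}) and e^{A}/tr(e^{A}) is at most 2 times the operator norm of E. -/

import Mathlib

open Matrix
open scoped Matrix.Norms.L2Operator
open scoped ComplexOrder

variable {n : Type*} [Fintype n] [DecidableEq n]

/-- The square root of a positive semidefinite matrix, as `Matrix.PosSemidef.sqrt` was defined in
Mathlib (December 2024); it has since been removed. -/
noncomputable def Matrix.PosSemidef.sqrt {A : Matrix n n ℂ} (hA : A.PosSemidef) : Matrix n n ℂ :=
  hA.1.eigenvectorUnitary.1 * Matrix.diagonal ((↑) ∘ Real.sqrt ∘ hA.1.eigenvalues) *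
  (star hA.1.eigenvectorUnitary : Matrix n n ℂ)

/-- The trace norm of a matrix: the sum of its singular values, computed as `tr √(Aᴴ A)`. -/
noncomputable def traceNorm (A : Matrix n n ℂ) : ℝ :=
  ((Matrix.posSemidef_conjTranspose_mul_self A).sqrt.trace).re

private lemma spectral' {A : Matrix n n ℂ} (hA : A.IsHermitian) :
    A = (hA.eigenvectorUnitary : Matrix n n ℂ) * diagonal (RCLike.ofReal ∘ hA.eigenvalues) *
      star (hA.eigenvectorUnitary : Matrix n n ℂ) :=
  hA.spectral_theorem

private lemma Matrix.PosSemidef.sqrt_mul_self {A : Matrix n n ℂ} (hA : A.PosSemidef) :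
    hA.sqrt * hA.sqrt = A := by
  have hUU' : star (hA.1.eigenvectorUnitary : Matrix n n ℂ) * hA.1.eigenvectorUnitary = 1 :=
    mem_unitaryGroup_iff'.mp hA.1.eigenvectorUnitary.2
  conv_rhs => rw [spectral' hA.1]
  simp only [Matrix.PosSemidef.sqrt]
  calc _ = (hA.1.eigenvectorUnitary : Matrix n n ℂ) *
        (diagonal ((↑) ∘ Real.sqrt ∘ hA.1.eigenvalues) *
          (star (hA.1.eigenvectorUnitary : Matrix n n ℂ) *
            (hA.1.eigenvectorUnitary : Matrix n n ℂ)) *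
          diagonal ((↑) ∘ Real.sqrt ∘ hA.1.eigenvalues)) *
        star (hA.1.eigenvectorUnitary : Matrix n n ℂ) := by simp only [Matrix.mul_assoc]
    _ = _ := by
      rw [hUU', Matrix.mul_one, diagonal_mul_diagonal]
      congr 3
      funext i
      simp only [Function.comp_apply]
      rw [← Complex.ofReal_mul, Real.mul_self_sqrt (hA.eigenvalues_nonneg i)]
      rfl

private lemma Matrix.PosSemidef.posSemidef_sqrt {A : Matrix n n ℂ} (hA : A.PosSemidef) :
    hA.sqrt.PosSemidef := by
  unfold Matrix.PosSemidef.sqrt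
  apply PosSemidef.mul_mul_conjTranspose_same
  refine posSemidef_diagonal_iff.mpr fun i => ?_
  exact Complex.zero_le_real.mpr (Real.sqrt_nonneg _)

private lemma sinh_le_mul_cosh {h : ℝ} (hh : 0 ≤ h) : Real.sinh h ≤ h * Real.cosh h := by
  have key : MonotoneOn (fun x : ℝ => x * Real.cosh x - Real.sinh x) (Set.Ici 0) := by
    have hd : ∀ x : ℝ, HasDerivAt (fun x : ℝ => x * Real.cosh x - Real.sinh x)
        (x * Real.sinh x) x := by
      intro x
      have h1 := ((hasDerivAt_id x).mul (Real.hasDerivAt_cosh x)).sub (Real.hasDerivAt_sinh x)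
      exact h1.congr_deriv (by simp only [id_eq]; ring)
    apply monotoneOn_of_deriv_nonneg (convex_Ici 0)
    · exact ((continuous_id.mul Real.continuous_cosh).sub Real.continuous_sinh).continuousOn
    · exact fun x _ => (hd x).differentiableAt.differentiableWithinAt
    · intro x hx
      rw [interior_Ici, Set.mem_Ioi] at hx
      rw [(hd x).deriv]
      exact mul_nonneg hx.le (Real.sinh_nonneg_iff.2 hx.le)
  have h0 := key (Set.self_mem_Ici) (Set.mem_Ici.2 hh) hh
  simp only [Real.sinh_zero, Real.cosh_zero, mul_one, zero_mul, sub_zero, zero_sub,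
    neg_zero] at h0
  linarith [h0]

private lemma abs_exp_sub_exp_le (a b : ℝ) :
    |Real.exp b - Real.exp a| ≤ |b - a| * (Real.exp a + Real.exp b) / 2 := by
  wlog hab : a ≤ b with H
  · have := H b a (le_of_not_ge hab)
    rw [abs_sub_comm a b, add_comm (Real.exp b), abs_sub_comm (Real.exp a)] at this
    exact this
  set m := (a + b) / 2 with hm
  set h := (b - a) / 2 with hdef
  have hh : 0 ≤ h := by simp only [hdef]; linarith
  have hb : b = m + h := by simp only [hm, hdef]; ring
  have ha : a = m - h := by simp only [hm, hdef]; ring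
  have e1 : Real.exp b - Real.exp a = 2 * Real.exp m * Real.sinh h := by
    rw [hb, ha, Real.sinh_eq, Real.exp_add, Real.exp_sub, Real.exp_neg]
    have := Real.exp_ne_zero h
    field_simp
  have e2 : |b - a| * (Real.exp a + Real.exp b) / 2 = 2 * h * (Real.exp m * Real.cosh h) := by
    rw [abs_of_nonneg (by linarith : (0:ℝ) ≤ b - a), hb, ha, Real.cosh_eq,
      Real.exp_add, Real.exp_sub, Real.exp_neg]
    have := Real.exp_ne_zero h
    field_simp
    ring
  rw [e1, e2, abs_of_nonneg (by positivity)]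
  have := sinh_le_mul_cosh hh
  nlinarith [Real.exp_pos m, Real.sinh_nonneg_iff.2 hh]

private lemma l2_opNorm_le_of_forall (M : Matrix n n ℂ) (c : ℝ) (hc : 0 ≤ c)
    (h : ∀ x : EuclideanSpace ℂ n, ‖(EuclideanSpace.equiv n ℂ).symm (M.mulVec x)‖ ≤ c * ‖x‖) :
    ‖M‖ ≤ c := by
  rw [Matrix.l2_opNorm_def]
  exact ContinuousLinearMap.opNorm_le_bound _ hc (fun x => h x)

private lemma matrix_norm_one_le : ‖(1 : Matrix n n ℂ)‖ ≤ 1 := by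
  apply l2_opNorm_le_of_forall _ _ zero_le_one
  intro x
  rw [Matrix.one_mulVec, one_mul]
  exact le_of_eq rfl

private lemma unitary_norm_le (U : Matrix.unitaryGroup n ℂ) : ‖(U : Matrix n n ℂ)‖ ≤ 1 := by
  have h := Matrix.l2_opNorm_conjTranspose_mul_self (U : Matrix n n ℂ)
  have hsm : (U : Matrix n n ℂ)ᴴ * (U : Matrix n n ℂ) = 1 :=
    mem_unitaryGroup_iff'.mp U.2
  rw [hsm] at h
  nlinarith [matrix_norm_one_le (n := n), norm_nonneg (U : Matrix n n ℂ),
    norm_nonneg (1 : Matrix n n ℂ)]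

private lemma diagonal_norm_le (d : n → ℂ) (hd : ∀ i, ‖d i‖ ≤ 1) :
    ‖diagonal d‖ ≤ 1 := by
  apply l2_opNorm_le_of_forall _ _ zero_le_one
  intro x
  rw [one_mul]
  have hx : ∀ y : EuclideanSpace ℂ n, ‖y‖ = Real.sqrt (∑ i, ‖y i‖ ^ 2) := fun y =>
    EuclideanSpace.norm_eq y
  rw [hx, hx]
  apply Real.sqrt_le_sqrt
  apply Finset.sum_le_sum
  intro i _
  have : ((EuclideanSpace.equiv n ℂ).symm ((diagonal d).mulVec x)) i = d i * x i := by
    show ((diagonal d).mulVec x) i = d i * x i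
    simp [Matrix.mulVec_diagonal]
  rw [this, norm_mul, mul_pow]
  have h1 : ‖d i‖ ^ 2 ≤ 1 := by nlinarith [hd i, norm_nonneg (d i)]
  calc ‖d i‖ ^ 2 * ‖x i‖ ^ 2 ≤ 1 * ‖x i‖ ^ 2 :=
        mul_le_mul_of_nonneg_right h1 (sq_nonneg _)
    _ = ‖x i‖ ^ 2 := one_mul _

private lemma col_sq_sum_le (M : Matrix n n ℂ) (i : n) :
    ∑ j, ‖M j i‖ ^ 2 ≤ ‖M‖ ^ 2 := by
  have h1 := M.l2_opNorm_mulVec (EuclideanSpace.single i (1:ℂ))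
  rw [EuclideanSpace.norm_single, norm_one, mul_one] at h1
  have h2 : ((EuclideanSpace.equiv n ℂ).symm (M.mulVec (EuclideanSpace.single i (1:ℂ)))) =
      (EuclideanSpace.equiv n ℂ).symm (fun j => M j i) := by
    congr 1
    ext j
    simp [Matrix.mulVec, dotProduct, EuclideanSpace.single_apply, mul_ite]
  rw [h2] at h1
  have h3 : ‖(EuclideanSpace.equiv n ℂ).symm (fun j => M j i)‖ ^ 2 = ∑ j, ‖M j i‖ ^ 2 := by
    rw [EuclideanSpace.norm_eq, Real.sq_sqrt (by positivity)]
    rfl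
  calc ∑ j, ‖M j i‖ ^ 2 = _ := h3.symm
    _ ≤ ‖M‖ ^ 2 := by
        have : (0:ℝ) ≤ ‖(EuclideanSpace.equiv n ℂ).symm (fun j => M j i)‖ := norm_nonneg _
        nlinarith [norm_nonneg M]

private lemma row_sq_sum_le (M : Matrix n n ℂ) (i : n) :
    ∑ j, ‖M i j‖ ^ 2 ≤ ‖M‖ ^ 2 := by
  have h := col_sq_sum_le Mᴴ i
  rw [Matrix.l2_opNorm_conjTranspose] at h
  have he : ∀ j, ‖Mᴴ j i‖ = ‖M i j‖ := by
    intro j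
    rw [Matrix.conjTranspose_apply]
    exact norm_star _
  calc ∑ j, ‖M i j‖ ^ 2 = ∑ j, ‖Mᴴ j i‖ ^ 2 := by simp_rw [he]
    _ ≤ ‖M‖ ^ 2 := h

/-- Cauchy–Schwarz: column of `P` against row of `Q`. -/
private lemma cs_col_row (P Q : Matrix n n ℂ) (j : n) :
    ∑ i, ‖P i j‖ * ‖Q j i‖ ≤ ‖P‖ * ‖Q‖ := by
  refine (Real.sum_mul_le_sqrt_mul_sqrt Finset.univ _ _).trans ?_
  have h1 : Real.sqrt (∑ i, ‖P i j‖ ^ 2) ≤ ‖P‖ := by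
    refine (Real.sqrt_le_sqrt (col_sq_sum_le P j)).trans ?_
    rw [Real.sqrt_sq (norm_nonneg _)]
  have h2 : Real.sqrt (∑ i, ‖Q j i‖ ^ 2) ≤ ‖Q‖ := by
    refine (Real.sqrt_le_sqrt (row_sq_sum_le Q j)).trans ?_
    rw [Real.sqrt_sq (norm_nonneg _)]
  exact mul_le_mul h1 h2 (Real.sqrt_nonneg _) (norm_nonneg _)

/-- Cauchy–Schwarz: row of `P` against column of `Q`. -/
private lemma cs_row_col (P Q : Matrix n n ℂ) (i : n) :
    ∑ j, ‖P i j‖ * ‖Q j i‖ ≤ ‖P‖ * ‖Q‖ := by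
  refine (Real.sum_mul_le_sqrt_mul_sqrt Finset.univ _ _).trans ?_
  have h1 : Real.sqrt (∑ j, ‖P i j‖ ^ 2) ≤ ‖P‖ := by
    refine (Real.sqrt_le_sqrt (row_sq_sum_le P i)).trans ?_
    rw [Real.sqrt_sq (norm_nonneg _)]
  have h2 : Real.sqrt (∑ j, ‖Q j i‖ ^ 2) ≤ ‖Q‖ := by
    refine (Real.sqrt_le_sqrt (col_sq_sum_le Q i)).trans ?_
    rw [Real.sqrt_sq (norm_nonneg _)]
  exact mul_le_mul h1 h2 (Real.sqrt_nonneg _) (norm_nonneg _)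

private lemma abs_trace_mul_psd_le (O S : Matrix n n ℂ) (hS : S.PosSemidef) :
    ‖Matrix.trace (O * S)‖ ≤ ‖O‖ * (Matrix.trace S).re := by
  set B := hS.sqrt with hB
  have hBB : B * B = S := hS.sqrt_mul_self
  have hBh : B.IsHermitian := hS.posSemidef_sqrt.1
  have htr : Matrix.trace (O * S) = Matrix.trace (B * O * B) := by
    rw [← hBB, ← Matrix.mul_assoc, Matrix.trace_mul_comm (O * B) B, ← Matrix.mul_assoc]
  set x : n → EuclideanSpace ℂ n := fun i => (EuclideanSpace.equiv n ℂ).symm (fun k => B k i)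
    with hxdef
  have hdiag : ∀ i, (B * O * B) i i = inner ℂ (x i) ((EuclideanSpace.equiv n ℂ).symm
      (O.mulVec (x i))) := by
    intro i
    rw [EuclideanSpace.inner_eq_star_dotProduct]
    show ∑ j, (∑ k, B i k * O k j) * B j i = ∑ j, (∑ k, O j k * B k i) * star (B j i)
    simp_rw [Finset.sum_mul]
    rw [Finset.sum_comm]
    refine Finset.sum_congr rfl fun j _ => Finset.sum_congr rfl fun k _ => ?_
    have hc : B i j = star (B j i) := by
      conv_lhs => rw [← hBh]
      exact Matrix.conjTranspose_apply B j i
    rw [hc]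
    ring
  have hxsq : ∑ i, ‖x i‖ ^ 2 = (Matrix.trace S).re := by
    have : ∀ i, ‖x i‖ ^ 2 = ∑ k, ‖B k i‖ ^ 2 := by
      intro i
      rw [EuclideanSpace.norm_eq, Real.sq_sqrt (by positivity)]
      rfl
    simp_rw [this]
    rw [← hBB]
    simp only [Matrix.trace, Matrix.diag, Matrix.mul_apply, Complex.re_sum]
    rw [Finset.sum_comm]
    apply Finset.sum_congr rfl
    intro i _
    apply Finset.sum_congr rfl
    intro k _
    have h1 : B i k = star (B k i) := by
      conv_lhs => rw [← hBh]
      exact Matrix.conjTranspose_apply B k i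
    rw [h1]
    rw [show star (B k i) * B k i = (starRingEnd ℂ) (B k i) * B k i from rfl, mul_comm,
      Complex.mul_conj]
    simp [Complex.sq_norm, ← Complex.normSq_eq_norm_sq]
  rw [htr]
  have h1 : ‖Matrix.trace (B * O * B)‖ ≤ ∑ i, ‖O‖ * ‖x i‖ ^ 2 := by
    rw [Matrix.trace]
    refine (norm_sum_le _ _).trans ?_
    apply Finset.sum_le_sum
    intro i _
    rw [Matrix.diag, hdiag i]
    refine (norm_inner_le_norm _ _).trans ?_
    have h2 := O.l2_opNorm_mulVec (x i)
    calc ‖x i‖ * ‖(EuclideanSpace.equiv n ℂ).symm (O.mulVec (x i))‖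
        ≤ ‖x i‖ * (‖O‖ * ‖x i‖) := by
          apply mul_le_mul_of_nonneg_left h2 (norm_nonneg _)
      _ = ‖O‖ * ‖x i‖ ^ 2 := by ring
  refine h1.trans ?_
  rw [← Finset.mul_sum, hxsq]

private lemma exp_spectral (A : Matrix n n ℂ) (hA : A.IsHermitian) :
    NormedSpace.exp A = (hA.eigenvectorUnitary : Matrix n n ℂ) *
      diagonal (fun i => (Real.exp (hA.eigenvalues i) : ℂ)) *
      (hA.eigenvectorUnitary : Matrix n n ℂ)ᴴ := by
  set V : Matrix n n ℂ := (hA.eigenvectorUnitary : Matrix n n ℂ) with hV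
  have hms : V * star V = 1 := mem_unitaryGroup_iff.mp hA.eigenvectorUnitary.2
  have hsm : star V * V = 1 := mem_unitaryGroup_iff'.mp hA.eigenvectorUnitary.2
  have hU : IsUnit V := ⟨⟨V, star V, hms, hsm⟩, rfl⟩
  have hinv : V⁻¹ = star V := Matrix.inv_eq_right_inv hms
  conv_lhs => rw [spectral' hA]
  rw [← hinv, Matrix.exp_conj V _ hU, Matrix.exp_diagonal, hinv]
  have hfun : NormedSpace.exp (RCLike.ofReal ∘ hA.eigenvalues)
      = fun i => (Real.exp (hA.eigenvalues i) : ℂ) := by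
    funext i
    rw [Pi.coe_exp]
    show NormedSpace.exp ((hA.eigenvalues i : ℝ) : ℂ) = _
    rw [← Complex.exp_eq_exp_ℂ, ← Complex.ofReal_exp]
  rw [hfun]
  rfl

private lemma exp_posSemidef (A : Matrix n n ℂ) (hA : A.IsHermitian) :
    (NormedSpace.exp A).PosSemidef := by
  rw [exp_spectral A hA]
  apply PosSemidef.mul_mul_conjTranspose_same
  refine posSemidef_diagonal_iff.mpr fun i => ?_
  exact Complex.zero_le_real.mpr (Real.exp_pos _).le

private lemma trace_exp_eq (A : Matrix n n ℂ) (hA : A.IsHermitian) :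
    Matrix.trace (NormedSpace.exp A) = ((∑ i, Real.exp (hA.eigenvalues i) : ℝ) : ℂ) := by
  rw [exp_spectral A hA]
  rw [Matrix.trace_mul_cycle]
  have h1 : (hA.eigenvectorUnitary : Matrix n n ℂ)ᴴ * (hA.eigenvectorUnitary : Matrix n n ℂ)
      = 1 := mem_unitaryGroup_iff'.mp hA.eigenvectorUnitary.2
  rw [h1, Matrix.one_mul, Matrix.trace_diagonal]
  push_cast
  rfl

set_option maxHeartbeats 1600000 in
/-- The core divided-difference estimate. -/
private lemma core_bound (A E O : Matrix n n ℂ) (hA : A.IsHermitian) (hE : E.IsHermitian)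
    (hO : ‖O‖ ≤ 1) :
    ‖Matrix.trace (O * (NormedSpace.exp (A + E) - NormedSpace.exp A))‖
      ≤ ‖E‖ * ((∑ i, Real.exp (hA.eigenvalues i))
          + ∑ i, Real.exp ((hA.add hE).eigenvalues i)) / 2 := by
  have hAE : (A + E).IsHermitian := hA.add hE
  set V : Matrix n n ℂ := (hA.eigenvectorUnitary : Matrix n n ℂ) with hVdef
  set U : Matrix n n ℂ := (hAE.eigenvectorUnitary : Matrix n n ℂ) with hUdef
  set μ := hA.eigenvalues with hμdef
  set ν := hAE.eigenvalues with hνdef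
  have hVV : V * star V = 1 := mem_unitaryGroup_iff.mp hA.eigenvectorUnitary.2
  have hVV' : star V * V = 1 := mem_unitaryGroup_iff'.mp hA.eigenvectorUnitary.2
  have hUU : U * star U = 1 := mem_unitaryGroup_iff.mp hAE.eigenvectorUnitary.2
  have hUU' : star U * U = 1 := mem_unitaryGroup_iff'.mp hAE.eigenvectorUnitary.2
  set dV := diagonal (fun i => (Real.exp (μ i) : ℂ)) with hdVdef
  set dU := diagonal (fun i => (Real.exp (ν i) : ℂ)) with hdUdef
  set W := star V * U with hWdef
  set M := W * dU - dV * W with hMdef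
  set P := star U * O * V with hPdef
  set Et := star V * E * U with hEtdef
  have hVW : V * W = U := by
    rw [hWdef, ← Matrix.mul_assoc, hVV, Matrix.one_mul]
  have hWU : W * star U = star V := by
    rw [hWdef, Matrix.mul_assoc, hUU, Matrix.mul_one]
  -- factorization of the difference of exponentials
  have hfact : NormedSpace.exp (A + E) - NormedSpace.exp A = V * M * star U := by
    have e0 : V * M * star U = V * (W * dU) * star U - V * (dV * W) * star U := by
      rw [hMdef, Matrix.mul_sub, Matrix.sub_mul]
    have e1 : V * (W * dU) * star U = U * dU * star U := by
      rw [← Matrix.mul_assoc V W dU, hVW]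
    have e2 : V * (dV * W) * star U = V * dV * star V := by
      rw [← Matrix.mul_assoc V dV W, Matrix.mul_assoc (V * dV) W (star U), hWU]
    rw [e0, e1, e2, exp_spectral A hA, exp_spectral (A + E) hAE]
    rfl
  -- entries of M
  have hM : ∀ j i, M j i = W j i * ((Real.exp (ν i) : ℂ) - (Real.exp (μ j) : ℂ)) := by
    intro j i
    rw [hMdef, Matrix.sub_apply, hdUdef, hdVdef, Matrix.mul_diagonal, Matrix.diagonal_mul]
    ring
  -- entries of Et
  have hEt : ∀ j i, Et j i = W j i * (((ν i : ℝ) : ℂ) - ((μ j : ℝ) : ℂ)) := by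
    have hE2 : Et = W * diagonal (RCLike.ofReal ∘ ν) - diagonal (RCLike.ofReal ∘ μ) * W := by
      have hsplit : E = (A + E) - A := (add_sub_cancel_left A E).symm
      rw [hEtdef]
      conv_lhs => rw [hsplit]
      rw [Matrix.mul_sub, Matrix.sub_mul]
      congr 1
      · conv_lhs => rw [spectral' hAE]
        show star V * ((U * diagonal (RCLike.ofReal ∘ ν)) * star U) * U = _
        rw [Matrix.mul_assoc (star V), Matrix.mul_assoc _ (star U) U, hUU', Matrix.mul_one,
          ← Matrix.mul_assoc, hWdef, Matrix.mul_assoc]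
      · conv_lhs => rw [spectral' hA]
        show star V * ((V * diagonal (RCLike.ofReal ∘ μ)) * star V) * U = _
        rw [← Matrix.mul_assoc, ← Matrix.mul_assoc, hVV', Matrix.one_mul, Matrix.mul_assoc,
          hWdef]
    intro j i
    rw [hE2, Matrix.sub_apply, Matrix.mul_diagonal, Matrix.diagonal_mul]
    show W j i * RCLike.ofReal (ν i) - RCLike.ofReal (μ j) * W j i = _
    ring_nf
    rfl
  -- trace identity
  have htr : Matrix.trace (O * (NormedSpace.exp (A + E) - NormedSpace.exp A))
      = Matrix.trace (P * M) := by
    rw [hfact]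
    calc Matrix.trace (O * (V * M * star U))
        = Matrix.trace ((O * V * M) * star U) := by
          rw [show O * (V * M * star U) = (O * V * M) * star U from by
            simp only [Matrix.mul_assoc]]
      _ = Matrix.trace (star U * (O * V * M)) := Matrix.trace_mul_comm _ _
      _ = Matrix.trace (P * M) := by
          rw [show star U * (O * V * M) = P * M from by
            rw [hPdef]; simp only [Matrix.mul_assoc]]
  -- norm bounds
  have hstarU : ‖star U‖ = ‖U‖ := Matrix.l2_opNorm_conjTranspose U
  have hstarV : ‖star V‖ = ‖V‖ := Matrix.l2_opNorm_conjTranspose V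
  have hUn : ‖U‖ ≤ 1 := unitary_norm_le hAE.eigenvectorUnitary
  have hVn : ‖V‖ ≤ 1 := unitary_norm_le hA.eigenvectorUnitary
  have hPn : ‖P‖ ≤ 1 := by
    have h1 := Matrix.l2_opNorm_mul (star U * O) V
    have h2 := Matrix.l2_opNorm_mul (star U) O
    have h3 : ‖star U * O‖ ≤ 1 := by
      refine h2.trans ?_
      rw [hstarU]
      calc ‖U‖ * ‖O‖ ≤ 1 * 1 :=
        mul_le_mul hUn hO (norm_nonneg _) zero_le_one
      _ = 1 := one_mul 1
    refine h1.trans ?_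
    calc ‖star U * O‖ * ‖V‖ ≤ 1 * 1 :=
      mul_le_mul h3 hVn (norm_nonneg _) zero_le_one
    _ = 1 := one_mul 1
  have hEtn : ‖Et‖ ≤ ‖E‖ := by
    have h1 := Matrix.l2_opNorm_mul (star V * E) U
    have h2 := Matrix.l2_opNorm_mul (star V) E
    have h3 : ‖star V * E‖ ≤ ‖E‖ := by
      refine h2.trans ?_
      rw [hstarV]
      calc ‖V‖ * ‖E‖ ≤ 1 * ‖E‖ :=
        mul_le_mul_of_nonneg_right hVn (norm_nonneg _)
      _ = ‖E‖ := one_mul _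
    refine h1.trans ?_
    calc ‖star V * E‖ * ‖U‖ ≤ ‖E‖ * 1 :=
      mul_le_mul h3 hUn (norm_nonneg _) (norm_nonneg _)
    _ = ‖E‖ := mul_one _
  -- entrywise bound
  have hkey : ∀ i j, ‖P i j‖ * ‖M j i‖
      ≤ ‖P i j‖ * ‖Et j i‖ * ((Real.exp (μ j) + Real.exp (ν i)) / 2) := by
    intro i j
    have hMn : ‖M j i‖ = ‖W j i‖ * |Real.exp (ν i) - Real.exp (μ j)| := by
      rw [hM j i, norm_mul]
      congr 1
      rw [← Complex.ofReal_sub, Complex.norm_real, Real.norm_eq_abs]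
    have hEn : ‖Et j i‖ = ‖W j i‖ * |ν i - μ j| := by
      rw [hEt j i, norm_mul]
      congr 1
      rw [← Complex.ofReal_sub, Complex.norm_real, Real.norm_eq_abs]
    have hscalar := abs_exp_sub_exp_le (μ j) (ν i)
    have hWn : (0:ℝ) ≤ ‖W j i‖ := norm_nonneg _
    have hPn' : (0:ℝ) ≤ ‖P i j‖ := norm_nonneg _
    rw [hMn, hEn]
    have step : ‖W j i‖ * |Real.exp (ν i) - Real.exp (μ j)|
        ≤ ‖W j i‖ * |ν i - μ j| * ((Real.exp (μ j) + Real.exp (ν i)) / 2) := by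
      rw [mul_assoc]
      apply mul_le_mul_of_nonneg_left _ hWn
      calc |Real.exp (ν i) - Real.exp (μ j)|
          ≤ |ν i - μ j| * (Real.exp (μ j) + Real.exp (ν i)) / 2 := hscalar
        _ = |ν i - μ j| * ((Real.exp (μ j) + Real.exp (ν i)) / 2) := by ring
    calc ‖P i j‖ * (‖W j i‖ * |Real.exp (ν i) - Real.exp (μ j)|)
        ≤ ‖P i j‖ * (‖W j i‖ * |ν i - μ j| * ((Real.exp (μ j) + Real.exp (ν i)) / 2)) :=
          mul_le_mul_of_nonneg_left step hPn'
      _ = ‖P i j‖ * (‖W j i‖ * |ν i - μ j|) * ((Real.exp (μ j) + Real.exp (ν i)) / 2) := by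
          ring
  -- sum everything
  rw [htr]
  have hts : ‖Matrix.trace (P * M)‖ ≤ ∑ i, ∑ j, ‖P i j‖ * ‖M j i‖ := by
    calc ‖Matrix.trace (P * M)‖ = ‖∑ i, ∑ j, P i j * M j i‖ := by
          simp only [Matrix.trace, Matrix.diag, Matrix.mul_apply]
      _ ≤ ∑ i, ‖∑ j, P i j * M j i‖ := norm_sum_le _ _
      _ ≤ ∑ i, ∑ j, ‖P i j * M j i‖ := Finset.sum_le_sum fun i _ => norm_sum_le _ _
      _ = ∑ i, ∑ j, ‖P i j‖ * ‖M j i‖ := by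
          apply Finset.sum_congr rfl
          intro i _
          exact Finset.sum_congr rfl fun j _ => norm_mul _ _
  refine hts.trans ?_
  have hstep2 : ∑ i, ∑ j, ‖P i j‖ * ‖M j i‖
      ≤ ∑ i, ∑ j, ‖P i j‖ * ‖Et j i‖ * ((Real.exp (μ j) + Real.exp (ν i)) / 2) :=
    Finset.sum_le_sum fun i _ => Finset.sum_le_sum fun j _ => hkey i j
  refine hstep2.trans ?_
  have hPE : ‖P‖ * ‖Et‖ ≤ ‖E‖ := by
    calc ‖P‖ * ‖Et‖ ≤ 1 * ‖E‖ := mul_le_mul hPn hEtn (norm_nonneg _) zero_le_one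
      _ = ‖E‖ := one_mul _
  have hsplit : ∑ i, ∑ j, ‖P i j‖ * ‖Et j i‖ * ((Real.exp (μ j) + Real.exp (ν i)) / 2)
      = (∑ i, ∑ j, ‖P i j‖ * ‖Et j i‖ * (Real.exp (μ j) / 2))
        + ∑ i, ∑ j, ‖P i j‖ * ‖Et j i‖ * (Real.exp (ν i) / 2) := by
    rw [← Finset.sum_add_distrib]
    refine Finset.sum_congr rfl fun i _ => ?_
    rw [← Finset.sum_add_distrib]
    refine Finset.sum_congr rfl fun j _ => ?_
    ring
  rw [hsplit]
  have hB1 : (∑ i, ∑ j, ‖P i j‖ * ‖Et j i‖ * (Real.exp (μ j) / 2))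
      ≤ ‖E‖ * (∑ j, Real.exp (μ j)) / 2 := by
    rw [Finset.sum_comm]
    have h1 : ∀ j : n, ∑ i, ‖P i j‖ * ‖Et j i‖ * (Real.exp (μ j) / 2)
        = (∑ i, ‖P i j‖ * ‖Et j i‖) * (Real.exp (μ j) / 2) := fun j =>
      (Finset.sum_mul _ _ _).symm
    calc ∑ j, ∑ i, ‖P i j‖ * ‖Et j i‖ * (Real.exp (μ j) / 2)
        = ∑ j, (∑ i, ‖P i j‖ * ‖Et j i‖) * (Real.exp (μ j) / 2) := by
          exact Finset.sum_congr rfl fun j _ => h1 j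
      _ ≤ ∑ j, ‖E‖ * (Real.exp (μ j) / 2) := by
          refine Finset.sum_le_sum fun j _ => ?_
          exact mul_le_mul_of_nonneg_right ((cs_col_row P Et j).trans hPE)
            (by positivity)
      _ = ‖E‖ * (∑ j, Real.exp (μ j)) / 2 := by
          rw [← Finset.mul_sum, ← Finset.sum_div]
          ring
  have hB2 : (∑ i, ∑ j, ‖P i j‖ * ‖Et j i‖ * (Real.exp (ν i) / 2))
      ≤ ‖E‖ * (∑ i, Real.exp (ν i)) / 2 := by
    have h1 : ∀ i : n, ∑ j, ‖P i j‖ * ‖Et j i‖ * (Real.exp (ν i) / 2)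
        = (∑ j, ‖P i j‖ * ‖Et j i‖) * (Real.exp (ν i) / 2) := fun i =>
      (Finset.sum_mul _ _ _).symm
    calc ∑ i, ∑ j, ‖P i j‖ * ‖Et j i‖ * (Real.exp (ν i) / 2)
        = ∑ i, (∑ j, ‖P i j‖ * ‖Et j i‖) * (Real.exp (ν i) / 2) := by
          exact Finset.sum_congr rfl fun i _ => h1 i
      _ ≤ ∑ i, ‖E‖ * (Real.exp (ν i) / 2) := by
          refine Finset.sum_le_sum fun i _ => ?_
          exact mul_le_mul_of_nonneg_right ((cs_row_col P Et i).trans hPE)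
            (by positivity)
      _ = ‖E‖ * (∑ i, Real.exp (ν i)) / 2 := by
          rw [← Finset.mul_sum, ← Finset.sum_div]
          ring
  calc (∑ i, ∑ j, ‖P i j‖ * ‖Et j i‖ * (Real.exp (μ j) / 2))
        + ∑ i, ∑ j, ‖P i j‖ * ‖Et j i‖ * (Real.exp (ν i) / 2)
      ≤ ‖E‖ * (∑ j, Real.exp (μ j)) / 2 + ‖E‖ * (∑ i, Real.exp (ν i)) / 2 :=
        add_le_add hB1 hB2
    _ = ‖E‖ * ((∑ i, Real.exp (μ i)) + ∑ i, Real.exp (ν i)) / 2 := by ring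

set_option maxHeartbeats 1600000 in
/-- For a Hermitian matrix, the trace norm is attained as `tr (O * D)` with `‖O‖ ≤ 1`. -/
private lemma traceNorm_eq_dual (D : Matrix n n ℂ) (hD : D.IsHermitian) :
    ∃ O : Matrix n n ℂ, ‖O‖ ≤ 1 ∧ ((traceNorm D : ℝ) : ℂ) = Matrix.trace (O * D) := by
  set U : Matrix n n ℂ := (hD.eigenvectorUnitary : Matrix n n ℂ) with hUdef
  set δ := hD.eigenvalues with hδdef
  have hUU : U * star U = 1 := mem_unitaryGroup_iff.mp hD.eigenvectorUnitary.2
  have hUU' : star U * U = 1 := mem_unitaryGroup_iff'.mp hD.eigenvectorUnitary.2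
  set s : n → ℝ := fun i => if δ i < 0 then -1 else 1 with hsdef
  have hsd : ∀ i, s i * δ i = |δ i| := by
    intro i
    by_cases h : δ i < 0
    · simp only [hsdef, if_pos h]
      rw [abs_of_neg h]; ring
    · simp only [hsdef, if_neg h]
      rw [abs_of_nonneg (le_of_not_gt h)]; ring
  set O : Matrix n n ℂ := U * diagonal (fun i => (s i : ℂ)) * star U with hOdef
  set S : Matrix n n ℂ := U * diagonal (fun i => ((|δ i| : ℝ) : ℂ)) * star U with hSdef
  -- multiplication of the two conjugated diagonals
  have hconj_mul : ∀ (a b : n → ℂ), (U * diagonal a * star U) * (U * diagonal b * star U)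
      = U * diagonal (fun i => a i * b i) * star U := by
    intro a b
    calc (U * diagonal a * star U) * (U * diagonal b * star U)
        = U * diagonal a * (star U * U) * (diagonal b * star U) := by
          simp only [Matrix.mul_assoc]
      _ = U * (diagonal a * diagonal b) * star U := by
          rw [hUU', Matrix.mul_one]
          simp only [Matrix.mul_assoc]
      _ = U * diagonal (fun i => a i * b i) * star U := by
          rw [Matrix.diagonal_mul_diagonal]
  have hDspec : D = U * diagonal (fun i => ((δ i : ℝ) : ℂ)) * star U := spectral' hD
  have hOD : O * D = S := by
    rw [hOdef, hSdef]
    conv_lhs => rw [hDspec]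
    rw [hconj_mul]
    have hfun : (fun i => (s i : ℂ) * (δ i : ℂ)) = fun i => ((|δ i| : ℝ) : ℂ) := by
      funext i
      rw [← Complex.ofReal_mul, hsd i]
    rw [hfun]
  have hSpsd : S.PosSemidef := by
    rw [hSdef]
    apply PosSemidef.mul_mul_conjTranspose_same
    exact posSemidef_diagonal_iff.mpr fun i => Complex.zero_le_real.mpr (abs_nonneg _)
  have hSsq : S ^ 2 = Dᴴ * D := by
    rw [hD.eq, pow_two, hSdef, hconj_mul]
    conv_rhs => rw [hDspec]
    rw [hconj_mul]
    have hfun : (fun i => ((|δ i| : ℝ) : ℂ) * ((|δ i| : ℝ) : ℂ))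
        = fun i => ((δ i : ℝ) : ℂ) * ((δ i : ℝ) : ℂ) := by
      funext i
      rw [← Complex.ofReal_mul, ← Complex.ofReal_mul, abs_mul_abs_self]
    rw [hfun]
  have hsqrt : S = (Matrix.posSemidef_conjTranspose_mul_self D).sqrt := by
    have hM := Matrix.posSemidef_conjTranspose_mul_self D
    have h1 : (Matrix.posSemidef_conjTranspose_mul_self D).sqrt = cfc Real.sqrt (Dᴴ * D) := by
      rw [Matrix.IsHermitian.cfc_eq hM.1 Real.sqrt]; rfl
    have h2 : Dᴴ * D = cfc (fun x : ℝ => x ^ 2) D := by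
      rw [cfc_pow_id D 2 hD.isSelfAdjoint, hD.eq, pow_two]
    have h3 : S = cfc (fun x : ℝ => |x|) D := by
      rw [Matrix.IsHermitian.cfc_eq hD]; rfl
    rw [h1, h2, ← cfc_comp Real.sqrt (fun x : ℝ => x ^ 2) D hD.isSelfAdjoint, h3]
    congr 1
    funext x
    exact (Real.sqrt_sq_eq_abs x).symm
  have htraceS : Matrix.trace S = ((∑ i, |δ i| : ℝ) : ℂ) := by
    rw [hSdef, Matrix.trace_mul_cycle, hUU', Matrix.one_mul, Matrix.trace_diagonal]
    push_cast
    rfl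
  have htn : traceNorm D = ∑ i, |δ i| := by
    rw [traceNorm, ← hsqrt, htraceS, Complex.ofReal_re]
  refine ⟨O, ?_, ?_⟩
  · have h1 := Matrix.l2_opNorm_mul (U * diagonal (fun i => (s i : ℂ))) (star U)
    have h2 := Matrix.l2_opNorm_mul U (diagonal (fun i => (s i : ℂ)))
    have hdn : ‖diagonal (fun i => (s i : ℂ))‖ ≤ 1 := by
      apply diagonal_norm_le
      intro i
      simp only [hsdef]
      by_cases h : δ i < 0 <;> simp [h]
    have hUn : ‖U‖ ≤ 1 := unitary_norm_le hD.eigenvectorUnitary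
    have hsUn : ‖star U‖ ≤ 1 := by
      rw [show ‖star U‖ = ‖Uᴴ‖ from rfl, Matrix.l2_opNorm_conjTranspose]
      exact hUn
    rw [hOdef]
    refine h1.trans ?_
    have h3 : ‖U * diagonal (fun i => (s i : ℂ))‖ ≤ 1 := by
      refine h2.trans ?_
      calc ‖U‖ * ‖diagonal (fun i => (s i : ℂ))‖ ≤ 1 * 1 :=
        mul_le_mul hUn hdn (norm_nonneg _) zero_le_one
      _ = 1 := one_mul 1
    calc ‖U * diagonal (fun i => (s i : ℂ))‖ * ‖star U‖ ≤ 1 * 1 :=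
      mul_le_mul h3 hsUn (norm_nonneg _) zero_le_one
    _ = 1 := one_mul 1
  · rw [hOD, htraceS, htn]

set_option maxHeartbeats 1600000 in
/-- For Hermitian matrices `A` and `E`, the trace distance between the
normalized matrix exponentials `e^{A+E}/tr(e^{A+E})` and `e^{A}/tr(e^{A})` is at most
`2‖E‖`. -/
theorem traceNorm_normalized_exp_sub_le
    (A E : Matrix n n ℂ) (hA : A.IsHermitian) (hE : E.IsHermitian) :
    traceNorm ((Matrix.trace (NormedSpace.exp (A + E)))⁻¹ • NormedSpace.exp (A + E)
        - (Matrix.trace (NormedSpace.exp A))⁻¹ • NormedSpace.exp A)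
      ≤ 2 * ‖E‖ := by
  rcases isEmpty_or_nonempty n with hempty | hne
  · have h0 : ∀ M : Matrix n n ℂ, Matrix.trace M = 0 := fun M => by
      simp [Matrix.trace]
    rw [traceNorm, h0, Complex.zero_re]
    positivity
  set Z : ℝ := ∑ i, Real.exp (hA.eigenvalues i) with hZdef
  set Z' : ℝ := ∑ i, Real.exp ((hA.add hE).eigenvalues i) with hZ'def
  have hZpos : 0 < Z := Finset.sum_pos (fun i _ => Real.exp_pos _) Finset.univ_nonempty
  have hZ'pos : 0 < Z' := Finset.sum_pos (fun i _ => Real.exp_pos _) Finset.univ_nonempty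
  have hEnn : (0:ℝ) ≤ ‖E‖ := norm_nonneg E
  have htrA : Matrix.trace (NormedSpace.exp A) = ((Z : ℝ) : ℂ) := trace_exp_eq A hA
  have htrAE : Matrix.trace (NormedSpace.exp (A + E)) = ((Z' : ℝ) : ℂ) :=
    trace_exp_eq (A + E) (hA.add hE)
  rw [htrA, htrAE]
  set X : Matrix n n ℂ := ((Z' : ℝ) : ℂ)⁻¹ • NormedSpace.exp (A + E)
      - ((Z : ℝ) : ℂ)⁻¹ • NormedSpace.exp A with hXdef
  have hexpA : (NormedSpace.exp A).PosSemidef := exp_posSemidef A hA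
  have hexpAE : (NormedSpace.exp (A + E)).PosSemidef := exp_posSemidef (A + E) (hA.add hE)
  have hXherm : X.IsHermitian := by
    show Xᴴ = X
    rw [hXdef, Matrix.conjTranspose_sub, Matrix.conjTranspose_smul, Matrix.conjTranspose_smul,
      hexpA.1.eq, hexpAE.1.eq]
    congr 1 <;>
    · congr 1
      rw [RCLike.star_def, map_inv₀, Complex.conj_ofReal]
  obtain ⟨O, hO, hdual⟩ := traceNorm_eq_dual X hXherm
  set K : ℝ := ‖E‖ * (Z + Z') / 2 with hKdef
  have hKnn : 0 ≤ K := by positivity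
  have hcore := core_bound A E O hA hE hO
  have hcore1 := core_bound A E 1 hA hE matrix_norm_one_le
  rw [← hZdef, ← hZ'def, ← hKdef] at hcore hcore1
  set t : ℂ := Matrix.trace (O * NormedSpace.exp A) with htdef
  set t' : ℂ := Matrix.trace (O * NormedSpace.exp (A + E)) with ht'def
  have hdiff : Matrix.trace (O * (NormedSpace.exp (A + E) - NormedSpace.exp A))
      = t' - t := by
    rw [Matrix.mul_sub, Matrix.trace_sub]
  rw [hdiff] at hcore
  have habs_zz : |Z' - Z| ≤ K := by
    have h1 : Matrix.trace ((1 : Matrix n n ℂ)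
        * (NormedSpace.exp (A + E) - NormedSpace.exp A)) = ((Z' - Z : ℝ) : ℂ) := by
      rw [Matrix.one_mul, Matrix.trace_sub, htrAE, htrA]
      push_cast
      ring
    rw [h1, Complex.norm_real, Real.norm_eq_abs] at hcore1
    exact hcore1
  have habs_t : ‖t‖ ≤ Z := by
    have h1 := abs_trace_mul_psd_le O _ hexpA
    rw [htrA, Complex.ofReal_re] at h1
    refine h1.trans ?_
    calc ‖O‖ * Z ≤ 1 * Z := mul_le_mul_of_nonneg_right hO hZpos.le
      _ = Z := one_mul _
  have habs_t' : ‖t'‖ ≤ Z' := by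
    have h1 := abs_trace_mul_psd_le O _ hexpAE
    rw [htrAE, Complex.ofReal_re] at h1
    refine h1.trans ?_
    calc ‖O‖ * Z' ≤ 1 * Z' := mul_le_mul_of_nonneg_right hO hZ'pos.le
      _ = Z' := one_mul _
  have hOX : Matrix.trace (O * X) = ((Z' : ℝ) : ℂ)⁻¹ * t' - ((Z : ℝ) : ℂ)⁻¹ * t := by
    rw [hXdef, Matrix.mul_sub, Matrix.trace_sub, mul_smul_comm, mul_smul_comm,
      Matrix.trace_smul, Matrix.trace_smul, smul_eq_mul, smul_eq_mul]
  have habs_invZ : ‖((Z : ℝ) : ℂ)⁻¹‖ = Z⁻¹ := by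
    rw [norm_inv, Complex.norm_real, Real.norm_eq_abs, abs_of_pos hZpos]
  have habs_invZ' : ‖((Z' : ℝ) : ℂ)⁻¹‖ = Z'⁻¹ := by
    rw [norm_inv, Complex.norm_real, Real.norm_eq_abs, abs_of_pos hZ'pos]
  have habs_invdiff : ‖((Z' : ℝ) : ℂ)⁻¹ - ((Z : ℝ) : ℂ)⁻¹‖
      = |Z' - Z| / (Z * Z') := by
    have h1 : ((Z' : ℝ) : ℂ)⁻¹ - ((Z : ℝ) : ℂ)⁻¹ = (((Z'⁻¹ - Z⁻¹ : ℝ)) : ℂ) := by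
      push_cast
      ring
    rw [h1, Complex.norm_real, Real.norm_eq_abs]
    have h2 : Z'⁻¹ - Z⁻¹ = (Z - Z') / (Z * Z') := by
      rw [inv_eq_one_div, inv_eq_one_div, div_sub_div _ _ hZ'pos.ne' hZpos.ne', one_mul,
        mul_one, mul_comm Z' Z]
    rw [h2, abs_div, abs_of_pos (mul_pos hZpos hZ'pos), abs_sub_comm]
  have hmain : traceNorm X ≤ ‖Matrix.trace (O * X)‖ := by
    calc traceNorm X ≤ |traceNorm X| := le_abs_self _
      _ = ‖((traceNorm X : ℝ) : ℂ)‖ := (by rw [Complex.norm_real, Real.norm_eq_abs])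
      _ = ‖Matrix.trace (O * X)‖ := by rw [hdual]
  refine hmain.trans ?_
  rcases le_total Z Z' with hcase | hcase
  · -- use denominator Z'
    have key : Matrix.trace (O * X)
        = ((Z' : ℝ) : ℂ)⁻¹ * (t' - t) + (((Z' : ℝ) : ℂ)⁻¹ - ((Z : ℝ) : ℂ)⁻¹) * t := by
      rw [hOX]; ring
    rw [key]
    calc ‖((Z' : ℝ) : ℂ)⁻¹ * (t' - t)
            + (((Z' : ℝ) : ℂ)⁻¹ - ((Z : ℝ) : ℂ)⁻¹) * t‖
        ≤ ‖((Z' : ℝ) : ℂ)⁻¹ * (t' - t)‖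
          + ‖(((Z' : ℝ) : ℂ)⁻¹ - ((Z : ℝ) : ℂ)⁻¹) * t‖ := norm_add_le _ _
      _ = Z'⁻¹ * ‖t' - t‖ + (|Z' - Z| / (Z * Z')) * ‖t‖ := by
          rw [norm_mul, norm_mul, habs_invZ', habs_invdiff]
      _ ≤ Z'⁻¹ * K + (K / (Z * Z')) * Z := by
          refine add_le_add ?_ ?_
          · exact mul_le_mul_of_nonneg_left hcore (by positivity)
          · refine mul_le_mul (by gcongr) habs_t (norm_nonneg _) (by positivity)
      _ ≤ 2 * ‖E‖ := by
          have he1 : Z'⁻¹ * K + (K / (Z * Z')) * Z = 2 * (K / Z') := by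
            rw [div_mul_eq_mul_div, mul_comm Z Z', mul_div_mul_right _ _ hZpos.ne',
              inv_mul_eq_div]
            ring
          rw [he1]
          have he2 : K ≤ ‖E‖ * Z' := by
            rw [hKdef]
            nlinarith [mul_nonneg hEnn (sub_nonneg.mpr hcase)]
          calc 2 * (K / Z') ≤ 2 * (‖E‖ * Z' / Z') := by gcongr
            _ = 2 * ‖E‖ := by rw [mul_div_cancel_right₀ _ hZ'pos.ne']
  · -- use denominator Z
    have key : Matrix.trace (O * X)
        = ((Z : ℝ) : ℂ)⁻¹ * (t' - t) + (((Z' : ℝ) : ℂ)⁻¹ - ((Z : ℝ) : ℂ)⁻¹) * t' := by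
      rw [hOX]; ring
    rw [key]
    calc ‖((Z : ℝ) : ℂ)⁻¹ * (t' - t)
            + (((Z' : ℝ) : ℂ)⁻¹ - ((Z : ℝ) : ℂ)⁻¹) * t'‖
        ≤ ‖((Z : ℝ) : ℂ)⁻¹ * (t' - t)‖
          + ‖(((Z' : ℝ) : ℂ)⁻¹ - ((Z : ℝ) : ℂ)⁻¹) * t'‖ := norm_add_le _ _
      _ = Z⁻¹ * ‖t' - t‖ + (|Z' - Z| / (Z * Z')) * ‖t'‖ := by
          rw [norm_mul, norm_mul, habs_invZ, habs_invdiff]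
      _ ≤ Z⁻¹ * K + (K / (Z * Z')) * Z' := by
          refine add_le_add ?_ ?_
          · exact mul_le_mul_of_nonneg_left hcore (by positivity)
          · refine mul_le_mul (by gcongr) habs_t' (norm_nonneg _) (by positivity)
      _ ≤ 2 * ‖E‖ := by
          have he1 : Z⁻¹ * K + (K / (Z * Z')) * Z' = 2 * (K / Z) := by
            rw [div_mul_eq_mul_div, mul_div_mul_right _ _ hZ'pos.ne', inv_mul_eq_div]
            ring
          rw [he1]
          have he2 : K ≤ ‖E‖ * Z := by
            rw [hKdef]
            nlinarith [mul_nonneg hEnn (sub_nonneg.mpr hcase)]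
          calc 2 * (K / Z) ≤ 2 * (‖E‖ * Z / Z) := by gcongr
            _ = 2 * ‖E‖ := by rw [mul_div_cancel_right₀ _ hZpos.ne']
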